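/- arXiv:1305.5481 — 3 statements merged into one kernel-verified Lean document; each statement's English description precedes it below -/
import Mathlib

section
/- For every natural number k with 0 ≤ k ≤ M−1, the approximate Jacobian satisfies A^k f = J^k f; that is, the powers of the Krylov-restricted operator A applied to f agree with the powers of the true operator J applied to f for all exponents strictly below the Krylov dimension M. (Paper's Lemma on the property of the Rosenbrock–Krylov approximate Jacobian, Lemma 1.) -/
/-- Lemma 1 (Property of the Rosenbrock–Krylov approximate Jacobian):
for `0 ≤ k ≤ M - 1`, `A^k f = J^k f`, where `A = P ∘ J ∘ P` and `P` is the
orthogonal projection onto the Krylov space `K_M(J, f)`. -/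
theorem rosenbrock_krylov_approx_jacobian_pow
    {E : Type*} [NormedAddCommGroup E] [InnerProductSpace ℝ E]
    [FiniteDimensional ℝ E]
    (J : E →L[ℝ] E) (f : E) (M : ℕ) (hM : 1 ≤ M)
    (K : Submodule ℝ E)
    (hK : K = Submodule.span ℝ (Set.range fun i : Fin M => (J ^ (i : ℕ)) f))
    (P : E →L[ℝ] E)
    (hP : P = K.subtypeL.comp (K.orthogonalProjectionOnto))
    (A : E →L[ℝ] E)
    (hA : A = P.comp (J.comp P)) :
    ∀ k : ℕ, k ≤ M - 1 → (A ^ k) f = (J ^ k) f := by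
  have hmem : ∀ k : ℕ, k < M → (J ^ k) f ∈ K := by
    intro k hk
    rw [hK]
    exact Submodule.subset_span ⟨⟨k, hk⟩, rfl⟩
  have hPfix : ∀ x ∈ K, P x = x := by
    intro x hx
    rw [hP]
    exact (K.starProjection_eq_self_iff).2 hx
  intro k hk
  induction k with
  | zero => simp
  | succ n ih =>
    have hn : n ≤ M - 1 := Nat.le_of_succ_le hk
    have hnM : n < M := lt_of_le_of_lt hn (Nat.sub_lt hM one_pos)
    have hn1M : n + 1 < M := Nat.lt_of_le_of_lt hk (Nat.sub_lt hM one_pos)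
    calc (A ^ (n + 1)) f = A ((A ^ n) f) := by rw [pow_succ']; rfl
      _ = A ((J ^ n) f) := by rw [ih hn]
      _ = P (J (P ((J ^ n) f))) := by rw [hA]; rfl
      _ = P (J ((J ^ n) f)) := by rw [hPfix _ (hmem n hnM)]
      _ = P ((J ^ (n + 1)) f) := by rw [pow_succ']; rfl
      _ = (J ^ (n + 1)) f := hPfix _ (hmem _ hn1M)
end

section
/- For every natural number ℓ ≤ M−1 and every word w of length ℓ in the two letters A and J (i.e., every finite composition of ℓ operators, each factor being either A or J), the word applied to f equals J^ℓ f: w(f) = J^ℓ f. In particular, every linear TW-tree of order k ≤ M corresponds to the single elementary differential J^{k−1} f regardless of the coloring of its nodes. (Paper's Lemma on elementary differentials of linear trees, Lemma 2.) -/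
/-- Lemma 2 (Elementary differentials of linear TW-trees): every word of length
`ℓ ≤ M - 1` in the two letters `A` and `J` applied to `f` equals `J^ℓ f`, where
`A = P ∘ J ∘ P` and `P` is the orthogonal projection onto the Krylov space
`K_M(J, f)`.  Hence every linear TW-tree of order `k ≤ M` corresponds to the single
elementary differential `J^{k-1} f`, regardless of the coloring of its nodes. -/
theorem linear_tree_elementary_differential
    {E : Type*} [NormedAddCommGroup E] [InnerProductSpace ℝ E]
    [FiniteDimensional ℝ E]
    (J : E →L[ℝ] E) (f : E) (M : ℕ) (hM : 1 ≤ M)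
    (K : Submodule ℝ E)
    (hK : K = Submodule.span ℝ (Set.range fun i : Fin M => (J ^ (i : ℕ)) f))
    (P : E →L[ℝ] E)
    (hP : P = K.subtypeL.comp K.orthogonalProjection)
    (A : E →L[ℝ] E)
    (hA : A = P.comp (J.comp P)) :
    ∀ ℓ : ℕ, ℓ ≤ M - 1 → ∀ w : Fin ℓ → (E →L[ℝ] E),
      (∀ i, w i = A ∨ w i = J) → ((List.ofFn w).prod) f = (J ^ ℓ) f := by
  -- P fixes elements of K
  have hPfix : ∀ x ∈ K, P x = x := by
    intro x hx
    simp [hP, ContinuousLinearMap.comp_apply,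
      ← Submodule.starProjection_apply, Submodule.starProjection_eq_self_iff.2 hx]
  -- J^i f ∈ K for i < M
  have hmem : ∀ i : ℕ, i < M → (J ^ i) f ∈ K := by
    intro i hi
    rw [hK]
    exact Submodule.subset_span ⟨⟨i, hi⟩, rfl⟩
  intro ℓ
  induction ℓ with
  | zero =>
    intro _ w _
    simp
  | succ n ih =>
    intro hn w hw
    have hn' : n ≤ M - 1 := le_of_lt (lt_of_lt_of_le (Nat.lt_succ_self n) hn)
    have htail := ih hn' (fun i => w i.succ) (fun i => hw i.succ)
    rw [List.ofFn_succ, List.prod_cons]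
    have hval : ((List.ofFn fun i : Fin n => w i.succ).prod) f = (J ^ n) f := htail
    have hmul : (w 0 * (List.ofFn fun i : Fin n => w i.succ).prod) f
        = w 0 (((List.ofFn fun i : Fin n => w i.succ).prod) f) := rfl
    rw [hmul, hval]
    have hnM : n < M := lt_of_le_of_lt (Nat.lt_succ_self n).le
      (lt_of_le_of_lt hn (Nat.sub_lt hM one_pos))
    have hn1M : n + 1 < M := by omega
    rcases hw 0 with h | h
    · rw [h, hA]
      simp only [ContinuousLinearMap.comp_apply]
      rw [hPfix _ (hmem n hnM)]
      have : J ((J ^ n) f) = (J ^ (n + 1)) f := by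
        rw [pow_succ']
        rfl
      rw [this, hPfix _ (hmem (n+1) hn1M)]
    · rw [h, pow_succ']
      rfl
end

section
/- Conversely, suppose λ ∈ S satisfies the reduced stage equation (I − c·A) λ = h·P F + h·A u for scalars c, h ∈ ℝ and vectors F, u ∈ E. Then the vector k := λ + h·(F − P F) satisfies the full Rosenbrock stage equation (I − c·A) k = h·F + h·A u. (Paper's stage reconstruction formula (2.12): k_i = V λ_i + h(F_i − V φ_i).) -/
/-- Stage reconstruction formula (2.12): if `λ ∈ S` satisfies the reduced stage
equation `(I - c•A) λ = h • P F + h • A u`, then `k = λ + h • (F - P F)` satisfies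
the full Rosenbrock stage equation `(I - c•A) k = h•F + h•A u`. -/
theorem rosenbrock_stage_reconstruction
    {E : Type*} [NormedAddCommGroup E] [InnerProductSpace ℝ E]
    [FiniteDimensional ℝ E]
    (S : Submodule ℝ E) (J : E →L[ℝ] E)
    (P : E →L[ℝ] E)
    (hP : P = S.subtypeL.comp (Submodule.orthogonalProjection S))
    (A : E →L[ℝ] E)
    (hA : A = P.comp (J.comp P))
    (c h : ℝ) (F u lam : E)
    (hlam : lam ∈ S)
    (hreduced : (ContinuousLinearMap.id ℝ E - c • A) lam = h • P F + h • A u) :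
    (ContinuousLinearMap.id ℝ E - c • A) (lam + h • (F - P F)) = h • F + h • A u := by
  have hPP : P (P F) = P F := by
    simp [hP, Submodule.orthogonalProjection_mem_subspace_eq_self, Submodule.starProjection_eq_self_iff]
  have hA0 : A (F - P F) = 0 := by
    simp [hA, map_sub, hPP]
  simp only [ContinuousLinearMap.sub_apply, ContinuousLinearMap.id_apply,
    ContinuousLinearMap.smul_apply] at hreduced ⊢
  rw [map_add, map_smul, hA0]
  rw [smul_zero, add_zero]
  have : lam + h • (F - P F) - c • A lam = (lam - c • A lam) + h • (F - P F) := by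
    abel
  rw [this, hreduced]
  rw [smul_sub]
  abel
end
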